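/- There exists an uncomputable infinite binary word U all of whose finite-state transducts are uncomputable, ultimately periodic, or finite. -/

import Mathlib

/-- A sequential finite-state transducer with input alphabet `S`,
output alphabet `G`, a finite set of states, an initial state,
a transition function and an output function. -/
structure FST (S G : Type) where
  Q : Type
  [fin : Fintype Q]
  init : Q
  tr : Q → S → Q
  out : Q → S → List G

namespace FST

variable {S G : Type}

/-- Extended transition function on finite words. -/
def trL (A : FST S G) : A.Q → List S → A.Q
  | q, [] => q
  | q, a :: u => A.trL (A.tr q a) u

/-- Extended output function on finite words. -/
def outL (A : FST S G) : A.Q → List S → List G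
  | _, [] => []
  | q, a :: u => A.out q a ++ A.outL (A.tr q a) u

/-- Output produced from the initial state on the length-`m` prefix of the
infinite input word `w`. -/
def outOn (A : FST S G) (w : ℕ → S) (m : ℕ) : List G :=
  A.outL A.init ((List.range m).map w)

/-- `A.Transduces w u` : running `A` on the infinite word `w` produces the
infinite word `u` (every letter of `u` eventually appears in the output of a
sufficiently long prefix of `w`). -/
def Transduces (A : FST S G) (w : ℕ → S) (u : ℕ → G) : Prop :=
  ∀ n : ℕ, ∃ m : ℕ, (A.outOn w m)[n]? = some (u n)

end FST

/-- An infinite word (or function) is ultimately periodic. -/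
def UltimatelyPeriodic {α : Type} (u : ℕ → α) : Prop :=
  ∃ N q : ℕ, 1 ≤ q ∧ ∀ n, N ≤ n → u (n + q) = u n

namespace FST

variable {S G : Type}

theorem trL_append (A : FST S G) (q : A.Q) (x y : List S) :
    A.trL q (x ++ y) = A.trL (A.trL q x) y := by
  induction x generalizing q with
  | nil => rfl
  | cons a x ih => simp [trL, ih]

theorem outL_append (A : FST S G) (q : A.Q) (x y : List S) :
    A.outL q (x ++ y) = A.outL q x ++ A.outL (A.trL q x) y := by
  induction x generalizing q with
  | nil => rfl
  | cons a x ih => simp [outL, trL, ih]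

/-- `U` extends the finite word `w`. -/
def Extends (w : List Bool) (U : ℕ → Bool) : Prop :=
  ∀ i (h : i < w.length), U i = w[i]

theorem map_range_eq {w : List Bool} {U : ℕ → Bool} (h : Extends w U) :
    (List.range w.length).map U = w := by
  apply List.ext_getElem
  · simp
  · intro n h1 h2
    simpa using h n h2

theorem outOn_prefix (A : FST Bool Bool) (U : ℕ → Bool) {m m' : ℕ} (h : m ≤ m') :
    A.outOn U m <+: A.outOn U m' := by
  have : (List.range m').map U = (List.range m).map U ++ ((List.range' m (m' - m)).map U) := by
    rw [← List.map_append]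
    congr 1
    rw [List.range_eq_range', List.range_eq_range']
    have hm : m' - m + m = m' := by omega
    calc List.range' 0 m' = List.range' 0 (m' - m + m) := by rw [hm]
      _ = List.range' 0 m ++ List.range' (0 + 1 * m) (m' - m) := by rw [Nat.add_comm (m' - m) m]; exact (List.range'_append (s := 0) (m := m) (n := m' - m) (step := 1)).symm
      _ = List.range' 0 m ++ List.range' m (m' - m) := by norm_num
  unfold outOn
  rw [this, outL_append]
  exact List.prefix_append _ _

theorem outOn_extends (A : FST Bool Bool) {w : List Bool} {U : ℕ → Bool} (h : Extends w U) :
    A.outOn U w.length = A.outL A.init w := by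
  unfold outOn; rw [map_range_eq h]

/-- From the finite prefix `w` on, no extension can transduce to `u`. -/
def Dead (A : FST Bool Bool) (u : ℕ → Bool) (w : List Bool) : Prop :=
  ∀ U : ℕ → Bool, Extends w U → ¬ A.Transduces U u

/-- If the output on `w` already disagrees with `u`, then `w` is dead. -/
theorem dead_of_mismatch (A : FST Bool Bool) (u : ℕ → Bool) (w : List Bool)
    {n : ℕ} (hn : n < (A.outL A.init w).length) (hne : (A.outL A.init w)[n] ≠ u n) :
    A.Dead u w := by
  intro U hU hT
  obtain ⟨m, hm⟩ := hT n
  have h1 : A.outOn U m <+: A.outOn U (max m w.length) := outOn_prefix _ _ (le_max_left _ _)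
  have h2 : A.outL A.init w <+: A.outOn U (max m w.length) := by
    rw [← outOn_extends A hU]; exact outOn_prefix _ _ (le_max_right _ _)
  have hn2 : n < (A.outOn U m).length := by
    rw [List.getElem?_eq_some_iff] at hm
    exact hm.1
  have hm' : (A.outOn U m)[n] = u n := by
    rw [List.getElem?_eq_some_iff] at hm
    obtain ⟨_, h⟩ := hm
    simpa using h
  apply hne
  rw [h2.getElem hn, ← h1.getElem hn2, hm']

/-- If outputs on all extensions of `w` are bounded in length, `w` is dead. -/
theorem dead_of_bounded (A : FST Bool Bool) (u : ℕ → Bool) (w : List Bool)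
    {L : ℕ} (hL : ∀ v : List Bool, (A.outL A.init (w ++ v)).length ≤ L) :
    A.Dead u w := by
  intro U hU hT
  obtain ⟨m, hm⟩ := hT L
  have hlen : (A.outOn U m).length ≤ L := by
    have h1 : A.outOn U m <+: A.outOn U (max m w.length) := outOn_prefix _ _ (le_max_left _ _)
    have hx : Extends (w ++ ((List.range' w.length (max m w.length - w.length)).map U)) U := by
      intro i hi
      by_cases h : i < w.length
      · rw [List.getElem_append_left h]; exact hU i h
      · push_neg at h
        rw [List.getElem_append_right h]
        simp only [List.getElem_map, List.getElem_range']
        congr 1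
        simp at hi
        omega
    have h2 : A.outOn U (max m w.length) = A.outL A.init (w ++ ((List.range' w.length (max m w.length - w.length)).map U)) := by
      have := outOn_extends A hx
      simpa using this
    calc (A.outOn U m).length ≤ (A.outOn U (max m w.length)).length := h1.length_le
      _ ≤ L := by rw [h2]; exact hL _
  rw [List.getElem?_eq_some_iff] at hm
  obtain ⟨h, -⟩ := hm
  omega

end FST

namespace FST

theorem outL_prefix (A : FST Bool Bool) (q : A.Q) {x y : List Bool} (h : x <+: y) :
    A.outL q x <+: A.outL q y := by
  obtain ⟨t, rfl⟩ := h
  rw [outL_append]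
  exact List.prefix_append _ _

theorem pump (A : FST Bool Bool) (q0 : A.Q)
    (H : ∀ L, ∃ v : List Bool, L < (A.outL q0 v).length) :
    ∃ a b : List Bool, A.trL q0 (a ++ b) = A.trL q0 a ∧ A.outL (A.trL q0 a) b ≠ [] := by
  haveI := A.fin
  set n := Fintype.card A.Q with hn
  set M := Finset.univ.sup (fun q : A.Q => max (A.out q false).length (A.out q true).length) with hMdef
  have hM : ∀ (q : A.Q) (b : Bool), (A.out q b).length ≤ M := by
    intro q b
    have h1 : max (A.out q false).length (A.out q true).length ≤ M :=
      Finset.le_sup (f := fun q : A.Q => max (A.out q false).length (A.out q true).length)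
        (Finset.mem_univ q)
    cases b
    · exact le_trans (le_max_left _ _) h1
    · exact le_trans (le_max_right _ _) h1
  obtain ⟨v, hv⟩ := H (n * (M + 1))
  set ℓ : ℕ → ℕ := fun i => (A.outL q0 (v.take i)).length with hldef
  have hmono : Monotone ℓ := by
    intro i j hij
    have hpre : v.take i <+: v.take j := by
      have : List.take i (List.take j v) = List.take i v := by
        rw [List.take_take, min_eq_left hij]
      rw [← this]
      exact List.take_prefix _ _
    exact (outL_prefix A q0 hpre).length_le
  have hstep : ∀ i, ℓ (i + 1) ≤ ℓ i + M := by
    intro i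
    by_cases h : i < v.length
    · have : v.take (i + 1) = v.take i ++ [v[i]] := by
        rw [List.take_succ, List.getElem?_eq_getElem h]
        rfl
      simp only [hldef, this, outL_append, List.length_append]
      have := hM (A.trL q0 (v.take i)) v[i]
      simp [outL]
      omega
    · have : v.take (i + 1) = v.take i := by
        push_neg at h
        rw [List.take_of_length_le h, List.take_of_length_le (by omega)]
      simp [hldef, this]
  have hex : ∀ j : Fin (n + 1), ∃ i, (j : ℕ) * (M + 1) ≤ ℓ i := by
    intro j
    refine ⟨v.length, ?_⟩
    have h1 : ℓ v.length = (A.outL q0 v).length := by simp [hldef]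
    have h2 : (j : ℕ) ≤ n := by omega
    have h3 : (j : ℕ) * (M + 1) ≤ n * (M + 1) := Nat.mul_le_mul_right _ h2
    omega
  set I : Fin (n + 1) → ℕ := fun j => Nat.find (hex j) with hIdef
  have hIlb : ∀ j : Fin (n + 1), (j : ℕ) * (M + 1) ≤ ℓ (I j) := fun j => Nat.find_spec (hex j)
  have hIub : ∀ j, ℓ (I j) < ((j : ℕ) + 1) * (M + 1) := by
    intro j
    have hexp : ((j : ℕ) + 1) * (M + 1) = (j : ℕ) * (M + 1) + (M + 1) := by ring
    rcases hI : I j with _ | i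
    · have : ℓ 0 = 0 := by simp [hldef, outL]
      omega
    · have hless : ¬ ((j : ℕ) * (M + 1) ≤ ℓ i) := by
        have := Nat.find_min (hex j) (by omega : i < I j)
        exact this
      have := hstep i
      omega
  have hstrict : ∀ j j' : Fin (n + 1), j < j' → ℓ (I j) < ℓ (I j') := by
    intro j j' hjj
    have h1 : ℓ (I j) < ((j : ℕ) + 1) * (M + 1) := hIub j
    have h2 : ((j : ℕ) + 1) * (M + 1) ≤ (j' : ℕ) * (M + 1) :=
      Nat.mul_le_mul_right _ (by exact_mod_cast hjj)
    have h3 := hIlb j'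
    omega
  have hIle : ∀ j j' : Fin (n + 1), j < j' → I j ≤ I j' := by
    intro j j' hjj
    by_contra hcon
    push_neg at hcon
    have := hmono (le_of_lt hcon)
    have := hstrict j j' hjj
    omega
  obtain ⟨x, y, hxy, hfeq⟩ := Fintype.exists_ne_map_eq_of_card_lt
    (fun j : Fin (n + 1) => A.trL q0 (v.take (I j))) (by simp [hn])
  -- wlog x < y
  suffices hgen : ∀ x y : Fin (n + 1), x < y →
      A.trL q0 (v.take (I x)) = A.trL q0 (v.take (I y)) →
      ∃ a b : List Bool, A.trL q0 (a ++ b) = A.trL q0 a ∧ A.outL (A.trL q0 a) b ≠ [] by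
    rcases hxy.lt_or_gt with h | h
    · exact hgen x y h hfeq
    · exact hgen y x h hfeq.symm
  intro x y hxy hfeq
  set a := v.take (I x) with ha
  set ab := v.take (I y) with hab
  have hle : I x ≤ I y := hIle x y hxy
  set b := ab.drop (I x) with hb
  have habeq : a ++ b = ab := by
    have : List.take (I x) ab = a := by
      rw [hab, ha, List.take_take, min_eq_left hle]
    rw [hb, ← this, List.take_append_drop]
  refine ⟨a, b, ?_, ?_⟩
  · rw [habeq, ← hfeq]
  · intro hcon
    have h1 : A.outL q0 ab = A.outL q0 a ++ A.outL (A.trL q0 a) b := by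
      rw [← habeq, outL_append]
    have h2 := hstrict x y hxy
    have e2 : ℓ (I y) = (A.outL q0 ab).length := rfl
    have e3 : ℓ (I x) = (A.outL q0 a).length := rfl
    rw [h1, hcon, List.append_nil] at e2
    omega

theorem trL_flatten_rep (A : FST Bool Bool) (q : A.Q) (b : List Bool) (hq : A.trL q b = q) :
    ∀ k, A.trL q (List.replicate k b).flatten = q := by
  intro k
  induction k with
  | zero => rfl
  | succ k ih => rw [List.replicate_succ, List.flatten_cons, trL_append, hq, ih]

theorem outL_flatten_rep (A : FST Bool Bool) (q : A.Q) (b : List Bool) (hq : A.trL q b = q) :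
    ∀ k, A.outL q (List.replicate k b).flatten = (List.replicate k (A.outL q b)).flatten := by
  intro k
  induction k with
  | zero => rfl
  | succ k ih =>
    rw [List.replicate_succ, List.flatten_cons, outL_append, hq, ih, List.replicate_succ,
      List.flatten_cons]

theorem length_flatten_rep {α : Type} (p : List α) (k : ℕ) :
    (List.replicate k p).flatten.length = k * p.length := by
  induction k with
  | zero => simp
  | succ k ih =>
    rw [List.replicate_succ, List.flatten_cons, List.length_append, ih]
    ring

theorem getElem_flatten_rep {α : Type} (p : List α) (hp : 0 < p.length) :
    ∀ (k j : ℕ) (h : j < (List.replicate k p).flatten.length),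
      (List.replicate k p).flatten[j] = p[j % p.length]'(Nat.mod_lt _ hp) := by
  intro k
  induction k with
  | zero => intro j h; simp [length_flatten_rep] at h
  | succ k ih =>
    intro j h
    have e : (List.replicate (k+1) p).flatten = p ++ (List.replicate k p).flatten := by
      rw [List.replicate_succ, List.flatten_cons]
    rw [List.getElem_of_eq e]
    rw [e] at h
    by_cases hj : j < p.length
    · rw [List.getElem_append_left hj]
      congr 1
      exact (Nat.mod_eq_of_lt hj).symm
    · push_neg at hj
      rw [List.getElem_append_right hj]
      have hlt : j - p.length < (List.replicate k p).flatten.length := by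
        simp only [List.length_append] at h
        omega
      rw [ih (j - p.length) hlt]
      congr 1
      conv_rhs => rw [show j = (j - p.length) + p.length by omega]
      rw [Nat.add_mod_right]

theorem up_of_prefixes (u : ℕ → Bool) (s p : List Bool) (hp : p ≠ [])
    (h : ∀ (k i : ℕ) (hi : i < (s ++ (List.replicate k p).flatten).length),
      (s ++ (List.replicate k p).flatten)[i] = u i) :
    UltimatelyPeriodic u := by
  have hplen : 0 < p.length := List.length_pos_iff.mpr hp
  refine ⟨s.length, p.length, hplen, ?_⟩
  intro m hm
  have hkl : m + p.length < (s ++ (List.replicate (m + p.length + 1) p).flatten).length := by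
    rw [List.length_append, length_flatten_rep]
    have : m + p.length + 1 ≤ (m + p.length + 1) * p.length :=
      Nat.le_mul_of_pos_right _ hplen
    omega
  have h2 := h (m + p.length + 1) (m + p.length) hkl
  have h1 := h (m + p.length + 1) m (lt_trans (by omega) hkl)
  rw [← h1, ← h2]
  rw [List.getElem_append_right (by omega), List.getElem_append_right hm]
  rw [getElem_flatten_rep p hplen, getElem_flatten_rep p hplen]
  congr 1
  conv_lhs => rw [show m + p.length - s.length = (m - s.length) + p.length by omega]
  rw [Nat.add_mod_right]

/-- Core lemma: any finite word can be extended to a dead one. -/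
theorem exists_kill (A : FST Bool Bool) (u : ℕ → Bool) (hu : ¬ UltimatelyPeriodic u)
    (w : List Bool) : ∃ v : List Bool, A.Dead u (w ++ v) := by
  by_cases hcons : ∀ (v : List Bool) (i : ℕ) (h : i < (A.outL A.init (w ++ v)).length),
      (A.outL A.init (w ++ v))[i] = u i
  · by_cases hbd : ∃ L, ∀ v : List Bool, (A.outL A.init (w ++ v)).length ≤ L
    · obtain ⟨L, hL⟩ := hbd
      refine ⟨[], dead_of_bounded A u (w ++ []) (L := L) ?_⟩
      intro v
      have : w ++ [] ++ v = w ++ v := by simp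
      rw [this]
      exact hL v
    · push_neg at hbd
      exfalso
      apply hu
      have H : ∀ L, ∃ v : List Bool, L < (A.outL (A.trL A.init w) v).length := by
        intro L
        obtain ⟨v, hv⟩ := hbd (L + (A.outL A.init w).length)
        refine ⟨v, ?_⟩
        rw [outL_append, List.length_append] at hv
        omega
      obtain ⟨a, b, hab, hbne⟩ := pump A (A.trL A.init w) H
      set q0 := A.trL A.init w with hq0
      set q' := A.trL q0 a with hq'
      have hqb : A.trL q' b = q' := by
        rw [hq', ← trL_append, hab]
      set s := A.outL A.init (w ++ a) with hs
      set p := A.outL q' b with hpd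
      apply up_of_prefixes u s p hbne
      intro k i hi
      have htr : A.trL A.init (w ++ a) = q' := by
        rw [trL_append, ← hq0, hq']
      have hkey : A.outL A.init (w ++ a ++ (List.replicate k b).flatten)
          = s ++ (List.replicate k p).flatten := by
        rw [outL_append, htr, outL_flatten_rep A q' b hqb, ← hs, hpd]
      have := hcons (a ++ (List.replicate k b).flatten) i
      rw [← List.append_assoc, hkey] at this
      exact this hi
  · push_neg at hcons
    obtain ⟨v, i, hlt, hne⟩ := hcons
    exact ⟨v, dead_of_mismatch A u (w ++ v) hlt hne⟩

end FST

/-! ### Enumeration of transducers and computable words -/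

def TData : Type :=
  Σ n : ℕ, (Fin (n + 1) → Bool → Fin (n + 1)) × (Fin (n + 1) → Bool → List Bool) × Fin (n + 1)

instance : Countable TData := by unfold TData; infer_instance

instance : Nonempty TData := ⟨⟨0, fun _ _ => 0, fun _ _ => [], 0⟩⟩

def mkFST (i : TData) : FST Bool Bool where
  Q := Fin (i.1 + 1)
  init := i.2.2.2
  tr := i.2.1
  out := i.2.2.1

noncomputable def tEnum : ℕ → TData := (exists_surjective_nat TData).choose

theorem tEnum_surj : Function.Surjective tEnum := (exists_surjective_nat TData).choose_spec

theorem exists_tdata (A : FST Bool Bool) :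
    ∃ i : TData, ∀ w m, (mkFST i).outOn w m = A.outOn w m := by
  haveI := A.fin
  have hpos : 0 < Fintype.card A.Q := Fintype.card_pos_iff.mpr ⟨A.init⟩
  obtain ⟨n, hn⟩ : ∃ n, Fintype.card A.Q = n + 1 :=
    ⟨Fintype.card A.Q - 1, by omega⟩
  let e := Fintype.equivFinOfCardEq hn
  set i : TData := ⟨n, fun q b => e (A.tr (e.symm q) b), fun q b => A.out (e.symm q) b, e A.init⟩
    with hi
  refine ⟨i, ?_⟩
  have htr : ∀ (q : A.Q) (b : Bool), (mkFST i).tr (e q) b = e (A.tr q b) := by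
    intro q b
    show e (A.tr (e.symm (e q)) b) = _
    rw [Equiv.symm_apply_apply]
  have hout : ∀ (q : A.Q) (b : Bool), (mkFST i).out (e q) b = A.out q b := by
    intro q b
    show A.out (e.symm (e q)) b = _
    rw [Equiv.symm_apply_apply]
  have key : ∀ (l : List Bool) (q : A.Q), (mkFST i).outL (e q) l = A.outL q l := by
    intro l
    induction l with
    | nil => intro q; rfl
    | cons a l ih =>
      intro q
      have e1 : (mkFST i).outL (e q) (a :: l)
          = (mkFST i).out (e q) a ++ (mkFST i).outL ((mkFST i).tr (e q) a) l := rfl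
      rw [e1, hout, htr, ih (A.tr q a)]
      rfl
  intro w m
  exact key ((List.range m).map w) A.init

open Classical in
noncomputable def uOf (c : Nat.Partrec.Code) : ℕ → Bool :=
  fun n => if 1 ∈ c.eval n then true else false

theorem computable_eq_uOf {u : ℕ → Bool} (hu : Computable u) :
    ∃ c : Nat.Partrec.Code, uOf c = u := by
  have h1 : Computable fun n : ℕ => (Encodable.encode (u n) : ℕ) :=
    Computable.encode.comp hu
  obtain ⟨c, hc⟩ := Nat.Partrec.Code.exists_code.mp (Partrec.nat_iff.mp h1)
  refine ⟨c, funext fun n => ?_⟩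
  have hcn : c.eval n = Part.some (Encodable.encode (u n)) := by rw [hc]; rfl
  unfold uOf
  rw [hcn]
  cases hn : u n <;> simp [hn, Part.mem_some_iff]

/-! ### The diagonal construction -/

theorem exists_kill' (A : FST Bool Bool) (u : ℕ → Bool) (w : List Bool) :
    ∃ v : List Bool, ¬ UltimatelyPeriodic u → A.Dead u (w ++ v) := by
  by_cases h : UltimatelyPeriodic u
  · exact ⟨[], fun hc => absurd h hc⟩
  · obtain ⟨v, hv⟩ := FST.exists_kill A u h w
    exact ⟨v, fun _ => hv⟩

noncomputable def killExt (A : FST Bool Bool) (u : ℕ → Bool) (w : List Bool) : List Bool :=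
  (exists_kill' A u w).choose

theorem killExt_spec (A : FST Bool Bool) (u : ℕ → Bool) (w : List Bool)
    (h : ¬ UltimatelyPeriodic u) : A.Dead u (w ++ killExt A u w) :=
  (exists_kill' A u w).choose_spec h

noncomputable def stepW (k : ℕ) (w : List Bool) : List Bool :=
  w ++ killExt (mkFST (tEnum k.unpair.1)) (uOf (Denumerable.ofNat _ k.unpair.2)) w

noncomputable def P : ℕ → List Bool
  | 0 => []
  | k + 1 => stepW k (P k) ++ [!(uOf (Denumerable.ofNat _ k) (stepW k (P k)).length)]

theorem P_succ (k : ℕ) :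
    P (k + 1) = stepW k (P k) ++ [!(uOf (Denumerable.ofNat _ k) (stepW k (P k)).length)] := rfl

theorem P_prefix_succ (k : ℕ) : P k <+: P (k + 1) := by
  rw [P_succ]
  exact (List.prefix_append _ _).trans ((stepW k (P k)).prefix_append _)

theorem P_chain {k m : ℕ} (h : k ≤ m) : P k <+: P m := by
  induction m, h using Nat.le_induction with
  | base => exact List.prefix_rfl
  | succ m _ ih => exact ih.trans (P_prefix_succ m)

theorem P_len (k : ℕ) : k ≤ (P k).length := by
  induction k with
  | zero => simp
  | succ k ih =>
    rw [P_succ, List.length_append]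
    have : (P k).length ≤ (stepW k (P k)).length := by
      unfold stepW
      simp
    simp
    omega

/-- The diagonal word. -/
noncomputable def UU : ℕ → Bool := fun n => (P (n + 1)).getD n false

theorem extends_P (k : ℕ) : FST.Extends (P k) UU := by
  intro i hi
  have h1 : i < (P (i + 1)).length := lt_of_lt_of_le (Nat.lt_succ_self i) (P_len (i + 1))
  have h2 : UU i = (P (i + 1))[i] := List.getD_eq_getElem _ _ h1
  rcases le_total k (i + 1) with h | h
  · rw [h2, (P_chain h).getElem hi]
  · rw [h2, (P_chain h).getElem h1]

theorem extends_of_prefix {w w' : List Bool} {U : ℕ → Bool} (h : w <+: w')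
    (h' : FST.Extends w' U) : FST.Extends w U := by
  intro i hi
  rw [h' i (lt_of_lt_of_le hi h.length_le), h.getElem hi]

theorem extends_stepW (k : ℕ) : FST.Extends (stepW k (P k)) UU := by
  apply extends_of_prefix _ (extends_P (k + 1))
  rw [P_succ]
  exact List.prefix_append _ _

theorem UU_not_computable : ¬ Computable UU := by
  intro hc
  obtain ⟨c, hcU⟩ := computable_eq_uOf hc
  set k := Encodable.encode c with hk
  set w1 := stepW k (P k) with hw1
  have h1 : P (k + 1) = w1 ++ [!(UU w1.length)] := by
    rw [P_succ, ← hw1, hk, Denumerable.ofNat_encode, hcU]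
  have hlt : w1.length < (P (k + 1)).length := by rw [h1]; simp
  have h2 : UU w1.length = (P (k + 1))[w1.length] :=
    (extends_P (k + 1)) w1.length hlt
  have h3 := List.getElem_of_eq h1 hlt
  simp only [List.getElem_concat_length] at h3
  rw [h3] at h2
  simp at h2

theorem UU_transducts (A : FST Bool Bool) (u : ℕ → Bool) (hT : A.Transduces UU u) :
    ¬ Computable u ∨ UltimatelyPeriodic u := by
  by_cases hup : UltimatelyPeriodic u
  · exact Or.inr hup
  · left
    intro hcomp
    obtain ⟨c, hcu⟩ := computable_eq_uOf hcomp
    obtain ⟨i, hout⟩ := exists_tdata A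
    obtain ⟨j, hj⟩ := tEnum_surj i
    set k := Nat.pair j (Encodable.encode c) with hk
    have hu1 : (k.unpair).1 = j := by rw [hk, Nat.unpair_pair]
    have hu2 : (k.unpair).2 = Encodable.encode c := by rw [hk, Nat.unpair_pair]
    have hdead : (mkFST i).Dead u (P k ++ killExt (mkFST i) u (P k)) := by
      have := killExt_spec (mkFST i) u (P k) hup
      exact this
    have hext : FST.Extends (P k ++ killExt (mkFST i) u (P k)) UU := by
      have := extends_stepW k
      unfold stepW at this
      rw [hu1, hu2, hj, Denumerable.ofNat_encode, hcu] at this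
      exact this
    apply hdead UU hext
    intro n
    obtain ⟨m, hm⟩ := hT n
    exact ⟨m, by rw [show (mkFST i).outOn UU m = A.outOn UU m from hout UU m]; exact hm⟩

/-- There exists an uncomputable infinite binary word `U` all of whose
finite-state transducts are uncomputable or ultimately periodic (finite
outputs are excluded by the definition of `Transduces`, which asks for an
infinite output word). -/
theorem exists_hereditarily_uncomputable_word :
    ∃ U : ℕ → Bool, ¬ Computable U ∧
      ∀ (A : FST Bool Bool) (u : ℕ → Bool), A.Transduces U u →
        ¬ Computable u ∨ UltimatelyPeriodic u := by
  exact ⟨UU, UU_not_computable, UU_transducts⟩
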